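/- Let {G_i}_{i∈I} be a finite collection of finite groups such that: (1) each G_i is a direct sum of groups L_{ij} with L_{ij}/Z(L_{ij}) simple; (2) each G_i is perfect; (3) for i ≠ j, no simple factor of G_i/Z(G_i) is isomorphic to a simple factor of G_j/Z(G_j); (4) there is c > 0 such that every proper subgroup H_i of G_i satisfies [G_i : H_i] ≥ |G_i|^c. Then for any subgroup H of G_I := ⊕_{i∈I} G_i, one has ∏_{i∈I} [G_i : pr_i(H)] ≥ [G_I : H]^c, where pr_i is the projection to the i-th factor. -/

import Mathlib

open Subgroup


/-- Quotients (surjective images) of perfect groups are perfect. -/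
lemma perfect_of_surjective {G Q : Type*} [Group G] [Group Q] (f : G →* Q)
    (hf : Function.Surjective f) (hG : commutator G = ⊤) : commutator Q = ⊤ := by
  have : Subgroup.map f (commutator G) = commutator Q := by
    rw [commutator_def, commutator_def, Subgroup.map_commutator,
      Subgroup.map_top_of_surjective f hf]
  rw [← this, hG, Subgroup.map_top_of_surjective f hf]

/-- A nontrivial finite group has a simple quotient. -/
lemma exists_simple_quotient (G : Type*) [Group G] [Finite G] [Nontrivial G] :
    ∃ M : Subgroup G, ∃ _ : M.Normal, IsSimpleGroup (G ⧸ M) := by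
  classical
  set p : Subgroup G → Prop := fun M => M.Normal ∧ M ≠ ⊤ with hp
  have hbot : p ⊥ := ⟨inferInstance, bot_ne_top⟩
  obtain ⟨M, -, hmax⟩ := Finite.exists_le_maximal hbot
  obtain ⟨⟨hMn, hMt⟩, hM⟩ := hmax
  refine ⟨M, hMn, ?_⟩
  have hnt : Nontrivial (G ⧸ M) := by
    obtain ⟨g, hg⟩ : ∃ g, g ∉ M := by
      by_contra h
      push_neg at h
      exact hMt (Subgroup.eq_top_iff' M |>.mpr h)
    exact ⟨⟨(g : G ⧸ M), 1, by simpa [QuotientGroup.eq_one_iff] using hg⟩⟩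
  refine ⟨fun K hK => ?_⟩
  set N := K.comap (QuotientGroup.mk' M) with hNdef
  have hNn : N.Normal := hK.comap _
  have hMN : M ≤ N := fun m hm => by
    simp only [hNdef, Subgroup.mem_comap]
    have h1 : QuotientGroup.mk' M m = 1 := (QuotientGroup.eq_one_iff m).mpr hm
    rw [h1]; exact K.one_mem
  have hmapN : N.map (QuotientGroup.mk' M) = K :=
    Subgroup.map_comap_eq_self_of_surjective (QuotientGroup.mk'_surjective M) K
  by_cases hNt : N = ⊤
  · right
    rw [← hmapN, hNt, Subgroup.map_top_of_surjective _ (QuotientGroup.mk'_surjective M)]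
  · left
    have : N ≤ M := hM ⟨hNn, hNt⟩ hMN
    have hNM : N = M := le_antisymm this hMN
    rw [← hmapN, hNM]
    ext q
    simp only [Subgroup.mem_map, Subgroup.mem_bot]
    constructor
    · rintro ⟨g, hg, rfl⟩
      exact (QuotientGroup.eq_one_iff g).mpr hg
    · rintro rfl
      exact ⟨1, M.one_mem, map_one _⟩


/-- The range of `MonoidHom.mulSingle` is a normal subgroup of the product. -/
lemma normal_range_mulSingle {ι : Type*} [DecidableEq ι] (K : ι → Type*) [∀ i, Group (K i)]
    (i : ι) : ((MonoidHom.mulSingle K i).range).Normal := by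
  constructor
  rintro x ⟨y, rfl⟩ g
  refine ⟨g i * y * (g i)⁻¹, ?_⟩
  funext j
  by_cases hj : j = i
  · subst hj
    simp [MonoidHom.mulSingle_apply]
  · simp [MonoidHom.mulSingle_apply, Pi.mulSingle_apply, hj]

/-- **Lemma B**: a simple nonabelian quotient of a finite product of groups is a quotient of
one of the factors. -/
lemma exists_factor_surjective {ι : Type*} [Fintype ι] [DecidableEq ι]
    (K : ι → Type*) [∀ i, Group (K i)] (Q : Type*) [Group Q] [IsSimpleGroup Q]
    (φ : (∀ i, K i) →* Q) (hφ : Function.Surjective φ) :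
    ∃ i, Function.Surjective (φ.comp (MonoidHom.mulSingle K i)) := by
  by_contra h
  push_neg at h
  have hnorm : ∀ i, ((φ.comp (MonoidHom.mulSingle K i)).range).Normal := by
    intro i
    have : (φ.comp (MonoidHom.mulSingle K i)).range
        = ((MonoidHom.mulSingle K i).range).map φ := by
      rw [MonoidHom.range_comp]
    rw [this]
    exact (normal_range_mulSingle K i).map φ hφ
  have hbot : ∀ i, (φ.comp (MonoidHom.mulSingle K i)).range = ⊥ := by
    intro i
    rcases (hnorm i).eq_bot_or_eq_top with hb | ht
    · exact hb
    · exact absurd (MonoidHom.range_eq_top.mp ht) (h i)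
  -- then φ is trivial, contradicting surjectivity onto a nontrivial group
  have htriv : ∀ x, φ x = 1 := by
    intro x
    have hx : x ∈ φ.ker := by
      apply Subgroup.pi_mem_of_mulSingle_mem
      intro i
      have : φ (Pi.mulSingle i (x i)) ∈ (φ.comp (MonoidHom.mulSingle K i)).range :=
        ⟨x i, rfl⟩
      rw [hbot i] at this
      simpa [MonoidHom.mem_ker] using this
    exact hx
  obtain ⟨a, b, hab⟩ := exists_pair_ne Q
  obtain ⟨x, rfl⟩ := hφ a
  obtain ⟨y, rfl⟩ := hφ b
  exact hab (by rw [htriv x, htriv y])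


section
variable {G Q : Type*} [Group G] [Group Q]

lemma center_eq_bot_of_simple_perfect [IsSimpleGroup Q] (hQ : commutator Q = ⊤) :
    Subgroup.center Q = ⊥ := by
  rcases (Subgroup.center Q).normal_of_characteristic.eq_bot_or_eq_top with h | h
  · exact h
  · exfalso
    have hcomm : ∀ a b : Q, a * b = b * a := by
      intro a b
      have ha : a ∈ Subgroup.center Q := h ▸ Subgroup.mem_top a
      exact (Subgroup.mem_center_iff.mp ha b).symm
    have : commutator Q = ⊥ := by
      rw [commutator_def, Subgroup.commutator_eq_bot_iff_le_centralizer]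
      intro x _
      exact Subgroup.mem_centralizer_iff.mpr fun y _ => (hcomm y x)
    rw [hQ] at this
    exact absurd this.symm bot_ne_top

/-- A simple nonabelian quotient of a perfect central-by-simple group is isomorphic to its
central quotient. -/
lemma quasisimple_quotient_iso [IsSimpleGroup Q] (hQ : commutator Q = ⊤)
    (hGsimple : IsSimpleGroup (G ⧸ Subgroup.center G))
    (g : G →* Q) (hg : Function.Surjective g) :
    Nonempty ((G ⧸ Subgroup.center G) ≃* Q) := by
  haveI := hGsimple
  set Z := Subgroup.center G
  have hZQ : Subgroup.center Q = ⊥ := center_eq_bot_of_simple_perfect hQ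
  have hcentermap : ∀ z ∈ Z, g z ∈ Subgroup.center Q := by
    intro z hz
    rw [Subgroup.mem_center_iff]
    intro q
    obtain ⟨l, rfl⟩ := hg q
    rw [← map_mul, ← map_mul, (Subgroup.mem_center_iff.mp hz l)]
  have hmapnormal : (g.ker.map (QuotientGroup.mk' Z)).Normal :=
    g.normal_ker.map _ (QuotientGroup.mk'_surjective Z)
  have hker : g.ker = Z := by
    rcases hmapnormal.eq_bot_or_eq_top with hb | ht
    · -- ker g ≤ Z and Z ≤ ker g
      apply le_antisymm
      · intro m hm
        have : QuotientGroup.mk' Z m ∈ g.ker.map (QuotientGroup.mk' Z) := ⟨m, hm, rfl⟩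
        rw [hb, Subgroup.mem_bot] at this
        exact (QuotientGroup.eq_one_iff m).mp this
      · intro z hz
        have := hcentermap z hz
        rw [hZQ, Subgroup.mem_bot] at this
        exact this
    · exfalso
      -- then Q would be abelian
      have hQab : ∀ q : Q, q ∈ Subgroup.center Q := by
        intro q
        obtain ⟨l, rfl⟩ := hg q
        have : QuotientGroup.mk' Z l ∈ g.ker.map (QuotientGroup.mk' Z) := ht ▸ Subgroup.mem_top _
        obtain ⟨m, hm, hml⟩ := this
        have hml' : (QuotientGroup.mk m : G ⧸ Z) = QuotientGroup.mk l := hml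
        have hzl : m⁻¹ * l ∈ Z := QuotientGroup.eq.mp hml'
        have : g l = g m * g (m⁻¹ * l) := by rw [← map_mul]; group
        rw [this]
        have h1 : g m = 1 := hm
        rw [h1, one_mul]
        exact hcentermap _ hzl
      obtain ⟨a, b, hab⟩ := exists_pair_ne Q
      have : a * b⁻¹ ∈ Subgroup.center Q := hQab _
      rw [hZQ, Subgroup.mem_bot] at this
      exact hab (by rwa [mul_inv_eq_one] at this)
  exact ⟨(QuotientGroup.quotientMulEquivOfEq hker.symm).trans
    (QuotientGroup.quotientKerEquivOfSurjective g hg)⟩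
end

/-- **Lemma A**: a simple perfect quotient of a perfect product of quasisimple groups is
isomorphic to one of the simple factors. -/
lemma lemA {G : Type*} [Group G] {J : Type*} [Fintype J] (L : J → Type*)
    [∀ j, Group (L j)] (e : G ≃* ∀ j, L j)
    (hsimple : ∀ j, IsSimpleGroup (L j ⧸ Subgroup.center (L j)))
    {Q : Type*} [Group Q] [IsSimpleGroup Q] (hQ : commutator Q = ⊤)
    (f : G →* Q) (hf : Function.Surjective f) :
    ∃ j, Nonempty ((L j ⧸ Subgroup.center (L j)) ≃* Q) := by
  classical
  have hφ : Function.Surjective (f.comp e.symm.toMonoidHom) :=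
    hf.comp e.symm.surjective
  obtain ⟨j, hj⟩ := exists_factor_surjective L Q (f.comp e.symm.toMonoidHom) hφ
  exact ⟨j, quasisimple_quotient_iso hQ (hsimple j) _ hj⟩

/-- **Key lemma**: the projection of `H` onto any block of coordinates on which all single
projections are surjective, is surjective. -/
lemma key (I : Type*) [Fintype I] [DecidableEq I]
    (G : I → Type*) [∀ i, Group (G i)] [∀ i, Fintype (G i)]
    (J : I → Type*) [∀ i, Fintype (J i)]
    (L : ∀ i, J i → Type*) [∀ i j, Group (L i j)] [∀ i j, Fintype (L i j)]
    (e : ∀ i, G i ≃* (∀ j, L i j))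
    (hsimple : ∀ i (j : J i), IsSimpleGroup (L i j ⧸ Subgroup.center (L i j)))
    (hperfect : ∀ i, commutator (G i) = ⊤)
    (hdisj : ∀ i i', i ≠ i' → ∀ (j : J i) (j' : J i'),
      IsEmpty ((L i j ⧸ Subgroup.center (L i j)) ≃* (L i' j' ⧸ Subgroup.center (L i' j'))))
    (H : Subgroup (∀ i, G i)) (s : Finset I)
    (hs : ∀ i ∈ s, H.map (Pi.evalMonoidHom G i) = ⊤) :
    ∀ x : ∀ i, G i, ∃ h ∈ H, ∀ i ∈ s, h i = x i := by
  classical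
  induction s using Finset.induction_on with
  | empty => exact fun x => ⟨1, H.one_mem, fun i hi => absurd hi (Finset.notMem_empty i)⟩
  | @insert a t hat ih =>
    have ih' := ih (fun i hi => hs i (Finset.mem_insert_of_mem hi))
    -- surjectivity of the projection to coordinate a
    have hsurja : ∀ g : G a, ∃ h ∈ H, h a = g := by
      intro g
      have := hs a (Finset.mem_insert_self a t)
      have hg : g ∈ H.map (Pi.evalMonoidHom G a) := this ▸ Subgroup.mem_top g
      obtain ⟨h, hh, rfl⟩ := hg
      exact ⟨h, hh, rfl⟩
    choose w hw1 hw2 using ih'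
    -- the subgroup of G a reachable with trivial t-coordinates
    set N : Subgroup (G a) :=
    { carrier := {g | ∃ h ∈ H, h a = g ∧ ∀ i ∈ t, h i = 1}
      one_mem' := ⟨1, H.one_mem, rfl, fun i _ => rfl⟩
      mul_mem' := by
        rintro g g' ⟨h, hh, rfl, hco⟩ ⟨h', hh', rfl, hco'⟩
        exact ⟨h * h', H.mul_mem hh hh', rfl, fun i hi => by
          simp only [Pi.mul_apply, hco i hi, hco' i hi, one_mul]⟩
      inv_mem' := by
        rintro g ⟨h, hh, rfl, hco⟩
        exact ⟨h⁻¹, H.inv_mem hh, rfl, fun i hi => by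
          simp only [Pi.inv_apply, hco i hi, inv_one]⟩ } with hNdef
    have hNmem : ∀ g : G a, g ∈ N ↔ ∃ h ∈ H, h a = g ∧ ∀ i ∈ t, h i = 1 := fun g => Iff.rfl
    have hNtop : N = ⊤ := by
      by_contra hNt
      haveI hNnormal : N.Normal := by
        constructor
        rintro n ⟨h, hh, rfl, hco⟩ g
        obtain ⟨h', hh', rfl⟩ := hsurja g
        refine (hNmem _).mpr ⟨h' * h * h'⁻¹, H.mul_mem (H.mul_mem hh' hh) (H.inv_mem hh'),
          rfl, fun i hi => ?_⟩
        simp only [Pi.mul_apply, Pi.inv_apply, hco i hi, mul_one, mul_inv_cancel]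
      haveI : Nontrivial (G a ⧸ N) := by
        obtain ⟨g, hg⟩ : ∃ g, g ∉ N := by
          by_contra hcon; push_neg at hcon
          exact hNt ((Subgroup.eq_top_iff' N).mpr hcon)
        exact ⟨⟨(g : G a ⧸ N), 1, by simpa [QuotientGroup.eq_one_iff] using hg⟩⟩
      obtain ⟨M, hMnormal, hMsimple⟩ := exists_simple_quotient (G a ⧸ N)
      haveI := hMnormal
      haveI := hMsimple
      set π : G a →* (G a ⧸ N) ⧸ M := (QuotientGroup.mk' M).comp (QuotientGroup.mk' N) with hπ
      have hπsurj : Function.Surjective π :=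
        (QuotientGroup.mk'_surjective M).comp (QuotientGroup.mk'_surjective N)
      have hπN : ∀ n ∈ N, π n = 1 := by
        intro n hn
        simp only [hπ, MonoidHom.comp_apply]
        rw [show (QuotientGroup.mk' N) n = 1 from (QuotientGroup.eq_one_iff n).mpr hn, map_one]
      have hQperf : commutator ((G a ⧸ N) ⧸ M) = ⊤ :=
        perfect_of_surjective π hπsurj (hperfect a)
      -- key well-definedness property
      have fspec : ∀ (y : ∀ i, G i) (h : ∀ i, G i), h ∈ H → (∀ i ∈ t, h i = y i) →
          π (h a) = π (w y a) := by
        intro y h hh hco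
        have hmem : h a * (w y a)⁻¹ ∈ N := by
          refine (hNmem _).mpr ⟨h * (w y)⁻¹, H.mul_mem hh (H.inv_mem (hw1 y)), rfl,
            fun i hi => ?_⟩
          simp only [Pi.mul_apply, Pi.inv_apply, hco i hi, hw2 y i hi, mul_inv_cancel]
        have := hπN _ hmem
        rw [map_mul, map_inv] at this
        exact mul_inv_eq_one.mp this
      -- assemble the homomorphism
      set ψ : (∀ i, G i) →* (G a ⧸ N) ⧸ M :=
      { toFun := fun y => π (w y a)
        map_one' := by
          have := fspec 1 1 H.one_mem (fun i _ => rfl)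
          simpa using this.symm
        map_mul' := by
          intro y y'
          have := fspec (y * y') (w y * w y') (H.mul_mem (hw1 y) (hw1 y'))
            (fun i hi => by simp only [Pi.mul_apply, hw2 y i hi, hw2 y' i hi])
          show π (w (y * y') a) = π (w y a) * π (w y' a)
          rw [← this]
          simp only [Pi.mul_apply, map_mul] } with hψ
      have hψsurj : Function.Surjective ψ := by
        intro q
        obtain ⟨g, rfl⟩ := hπsurj q
        obtain ⟨h, hh, rfl⟩ := hsurja g
        exact ⟨h, (fspec h h hh (fun i _ => rfl)).symm⟩
      obtain ⟨i, hi⟩ := exists_factor_surjective G _ ψ hψsurj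
      have hit : i ∈ t := by
        by_contra hit
        obtain ⟨q, q', hqq⟩ := exists_pair_ne ((G a ⧸ N) ⧸ M)
        obtain ⟨g, hg⟩ := hi q
        obtain ⟨g', hg'⟩ := hi q'
        have triv : ∀ z : G i, ψ (Pi.mulSingle i z) = 1 := by
          intro z
          have := fspec (Pi.mulSingle i z) 1 H.one_mem (fun i' hi' => by
            have hne : i' ≠ i := fun hii => hit (hii ▸ hi')
            rw [Pi.one_apply, Pi.mulSingle_eq_of_ne hne])
          show π (w (Pi.mulSingle i z) a) = 1
          simpa using this.symm
        have h1 : ψ.comp (MonoidHom.mulSingle G i) g = 1 := triv g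
        have h2 : ψ.comp (MonoidHom.mulSingle G i) g' = 1 := triv g'
        exact hqq (by rw [← hg, ← hg', h1, h2])
      have hia : i ≠ a := fun hia => hat (hia ▸ hit)
      obtain ⟨j', ⟨iso'⟩⟩ := lemA (L i) (e i) (hsimple i) hQperf
        (ψ.comp (MonoidHom.mulSingle G i)) hi
      obtain ⟨j, ⟨iso⟩⟩ := lemA (L a) (e a) (hsimple a) hQperf π hπsurj
      exact (hdisj a i (fun h' => hia h'.symm) j j').false (iso.trans iso'.symm)
    -- now finish the induction step
    intro x
    obtain ⟨h, hh, hco⟩ : ∃ h ∈ H, ∀ i ∈ t, h i = x i := ⟨w x, hw1 x, hw2 x⟩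
    have : x a * (h a)⁻¹ ∈ N := hNtop ▸ Subgroup.mem_top _
    obtain ⟨h', hh', hea, hco'⟩ := (hNmem _).mp this
    refine ⟨h' * h, H.mul_mem hh' hh, fun i hi => ?_⟩
    rcases Finset.mem_insert.mp hi with rfl | hi
    · simp only [Pi.mul_apply, hea]
      group
    · simp only [Pi.mul_apply, hco' i hi, hco i hi, one_mul]

/-- Let `{G_i}_{i ∈ I}` be a finite collection of finite groups such that:
(1) each `G_i` is a direct sum of groups `L_{ij}` with `L_{ij}/Z(L_{ij})` simple;
(2) each `G_i` is perfect;
(3) for `i ≠ i'` no simple factor of `G_i/Z(G_i)` is isomorphic to one of `G_{i'}/Z(G_{i'})`;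
(4) there is `c > 0` with `[G_i : H_i] ≥ |G_i|^c` for every proper subgroup `H_i ≤ G_i`.
Then every subgroup `H` of `G_I = ⊕_i G_i` satisfies
`∏_i [G_i : pr_i(H)] ≥ [G_I : H]^c`. -/
theorem stmt3 (I : Type*) [Fintype I] [DecidableEq I]
    (G : I → Type*) [∀ i, Group (G i)] [∀ i, Fintype (G i)]
    -- (1) each `G i` decomposes as a direct sum of the almost simple groups `L i j`
    (J : I → Type*) [∀ i, Fintype (J i)]
    (L : ∀ i, J i → Type*) [∀ i j, Group (L i j)] [∀ i j, Fintype (L i j)]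
    (e : ∀ i, G i ≃* (∀ j, L i j))
    (hsimple : ∀ i (j : J i), IsSimpleGroup (L i j ⧸ Subgroup.center (L i j)))
    -- (2) each `G i` is perfect
    (hperfect : ∀ i, commutator (G i) = ⊤)
    -- (3) for `i ≠ i'`, the simple factors are pairwise non-isomorphic
    (hdisj : ∀ i i', i ≠ i' → ∀ (j : J i) (j' : J i'),
      IsEmpty ((L i j ⧸ Subgroup.center (L i j)) ≃* (L i' j' ⧸ Subgroup.center (L i' j'))))
    -- (4) uniform lower bound on indices of proper subgroups
    (c : ℝ) (hc : 0 < c)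
    (hindex : ∀ i (H₀ : Subgroup (G i)), H₀ ≠ ⊤ →
      (Fintype.card (G i) : ℝ) ^ c ≤ (H₀.index : ℝ))
    (H : Subgroup (∀ i, G i)) :
    (H.index : ℝ) ^ c ≤ ∏ i, ((H.map (Pi.evalMonoidHom G i)).index : ℝ) := by
  classical
  set K : ∀ i, Subgroup (G i) := fun i => H.map (Pi.evalMonoidHom G i) with hK
  set S : Finset I := Finset.univ.filter (fun i => K i ≠ ⊤) with hS
  have hScompl : ∀ i ∈ Sᶜ, K i = ⊤ := by
    intro i hi
    by_contra hcon
    rw [Finset.mem_compl, hS, Finset.mem_filter] at hi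
    exact hi ⟨Finset.mem_univ i, hcon⟩
  have hkey := key I G J L e hsimple hperfect hdisj H Sᶜ hScompl
  -- |H| ≥ ∏_{i ∈ Sᶜ} |G i|
  have hHcard : ∏ i ∈ Sᶜ, Nat.card (G i) ≤ Nat.card H := by
    have hsurj : Function.Surjective
        (fun (h : H) (i : ↥(Sᶜ : Finset I)) => (h : ∀ i, G i) i) := by
      intro x
      obtain ⟨h, hh, hco⟩ := hkey (fun i => if hi : i ∈ Sᶜ then x ⟨i, hi⟩ else 1)
      refine ⟨⟨h, hh⟩, funext fun i => ?_⟩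
      have := hco i i.2
      simpa [dif_pos i.2] using this
    have := Nat.card_le_card_of_surjective _ hsurj
    calc ∏ i ∈ Sᶜ, Nat.card (G i)
        = ∏ i : ↥(Sᶜ : Finset I), Nat.card (G i) := (Finset.prod_coe_sort _ _).symm
      _ = Nat.card (∀ i : ↥(Sᶜ : Finset I), G i) := Nat.card_pi.symm
      _ ≤ Nat.card H := this
  -- H.index ≤ ∏_{i ∈ S} |G i|
  have hidx : H.index ≤ ∏ i ∈ S, Nat.card (G i) := by
    have hmul : H.index * Nat.card H = Nat.card (∀ i, G i) := by
      rw [mul_comm]; exact Subgroup.card_mul_index H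
    have hcardpi : Nat.card (∀ i, G i) = (∏ i ∈ S, Nat.card (G i)) * ∏ i ∈ Sᶜ, Nat.card (G i) := by
      rw [Nat.card_pi, Finset.prod_mul_prod_compl]
    have hpos : 0 < ∏ i ∈ Sᶜ, Nat.card (G i) :=
      Finset.prod_pos fun i _ => Nat.card_pos
    have : H.index * ∏ i ∈ Sᶜ, Nat.card (G i) ≤
        (∏ i ∈ S, Nat.card (G i)) * ∏ i ∈ Sᶜ, Nat.card (G i) := by
      calc H.index * ∏ i ∈ Sᶜ, Nat.card (G i)
          ≤ H.index * Nat.card H := Nat.mul_le_mul_left _ hHcard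
        _ = (∏ i ∈ S, Nat.card (G i)) * ∏ i ∈ Sᶜ, Nat.card (G i) := by rw [hmul, hcardpi]
    exact Nat.le_of_mul_le_mul_right this hpos
  -- pass to the reals
  have step1 : (H.index : ℝ) ^ c ≤ (∏ i ∈ S, (Nat.card (G i) : ℝ)) ^ c := by
    apply Real.rpow_le_rpow (Nat.cast_nonneg _) _ hc.le
    rw [← Nat.cast_prod]
    exact_mod_cast hidx
  have step2 : (∏ i ∈ S, (Nat.card (G i) : ℝ)) ^ c = ∏ i ∈ S, (Nat.card (G i) : ℝ) ^ c :=
    (Real.finset_prod_rpow S _ (fun i _ => Nat.cast_nonneg _) c).symm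
  have step3 : ∏ i ∈ S, (Nat.card (G i) : ℝ) ^ c ≤ ∏ i ∈ S, ((K i).index : ℝ) := by
    apply Finset.prod_le_prod
    · intro i _
      exact Real.rpow_nonneg (Nat.cast_nonneg _) c
    · intro i hi
      rw [hS, Finset.mem_filter] at hi
      have := hindex i (K i) hi.2
      rwa [Nat.card_eq_fintype_card]
  have step4 : ∏ i ∈ S, ((K i).index : ℝ) = ∏ i, ((K i).index : ℝ) := by
    apply Finset.prod_subset (Finset.subset_univ S)
    intro i _ hi
    have : K i = ⊤ := hScompl i (Finset.mem_compl.mpr hi)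
    rw [this, Subgroup.index_top, Nat.cast_one]
  calc (H.index : ℝ) ^ c ≤ (∏ i ∈ S, (Nat.card (G i) : ℝ)) ^ c := step1
    _ = ∏ i ∈ S, (Nat.card (G i) : ℝ) ^ c := step2
    _ ≤ ∏ i ∈ S, ((K i).index : ℝ) := step3
    _ = ∏ i, ((K i).index : ℝ) := step4
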